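/- Let 0 < λ < Λ, let F and G be uniformly elliptic operators on symmetric n×n matrices with G(X) ≤ F(X) for every symmetric matrix X, let f, g ∈ L^∞(B₁), and let (u,v) solve the two membranes problem for (F, G, f, g, u₀, v₀) in the viscosity sense. Then |F(D²u)| ≤ max(‖f‖_{L^∞(B₁)}, ‖g‖_{L^∞(B₁)}) in B₁ in the viscosity sense; precisely: for every C² function φ and x₀ ∈ B₁ with φ ≤ u on B₁ and φ(x₀) = u(x₀), one has F(D²φ(x₀)) ≤ ‖f‖_{L^∞(B₁)}; and for every C² function φ and x₀ ∈ B₁ with φ ≥ u on B₁ and φ(x₀) = u(x₀), one has F(D²φ(x₀)) ≥ −max(‖f‖_{L^∞(B₁)}, ‖g‖_{L^∞(B₁)}). -/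

import Mathlib

open Metric Set Matrix

noncomputable section

/-- Euclidean space `ℝⁿ`. -/
abbrev EucSp (n : ℕ) := EuclideanSpace ℝ (Fin n)

/-- The class `L_{λ,Λ}` of symmetric matrices whose eigenvalues lie between `lam` and `Lam`,
i.e. `lam • I ≤ A ≤ Lam • I`. -/
def PucciClass (n : ℕ) (lam Lam : ℝ) : Set (Matrix (Fin n) (Fin n) ℝ) :=
  {A | A.IsSymm ∧ (A - lam • (1 : Matrix (Fin n) (Fin n) ℝ)).PosSemidef ∧
    (Lam • (1 : Matrix (Fin n) (Fin n) ℝ) - A).PosSemidef}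

/-- The Pucci maximal operator `M⁺(X) = sup_{A ∈ L_{λ,Λ}} tr (A X)`. -/
def PucciSup (n : ℕ) (lam Lam : ℝ) (X : Matrix (Fin n) (Fin n) ℝ) : ℝ :=
  sSup ((fun A => (A * X).trace) '' PucciClass n lam Lam)

/-- The Pucci minimal operator `M⁻(X) = inf_{A ∈ L_{λ,Λ}} tr (A X)`. -/
def PucciInf (n : ℕ) (lam Lam : ℝ) (X : Matrix (Fin n) (Fin n) ℝ) : ℝ :=
  sInf ((fun A => (A * X).trace) '' PucciClass n lam Lam)

/-- The Hessian matrix `D²φ(x)` of `φ : ℝⁿ → ℝ`. -/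
def Hess (n : ℕ) (φ : EucSp n → ℝ) (x : EucSp n) : Matrix (Fin n) (Fin n) ℝ :=
  Matrix.of fun i j =>
    fderiv ℝ (fun y => fderiv ℝ φ y (EuclideanSpace.single j 1)) x (EuclideanSpace.single i 1)

/-- `F(D²u) ≤ f` in `U` in the viscosity sense: whenever a `C²` function `φ` touches `u` from
below at `x₀ ∈ U`, then `F(D²φ(x₀)) ≤ f(x₀)`. -/
def ViscLE (n : ℕ) (F : Matrix (Fin n) (Fin n) ℝ → ℝ) (u f : EucSp n → ℝ)
    (U : Set (EucSp n)) : Prop :=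
  ∀ φ : EucSp n → ℝ, ContDiff ℝ 2 φ → ∀ x₀ ∈ U, (∀ x ∈ U, φ x ≤ u x) → φ x₀ = u x₀ →
    F (Hess n φ x₀) ≤ f x₀

/-- `F(D²u) ≥ f` in `U` in the viscosity sense: whenever a `C²` function `φ` touches `u` from
above at `x₀ ∈ U`, then `F(D²φ(x₀)) ≥ f(x₀)`. -/
def ViscGE (n : ℕ) (F : Matrix (Fin n) (Fin n) ℝ → ℝ) (u f : EucSp n → ℝ)
    (U : Set (EucSp n)) : Prop :=
  ∀ φ : EucSp n → ℝ, ContDiff ℝ 2 φ → ∀ x₀ ∈ U, (∀ x ∈ U, u x ≤ φ x) → φ x₀ = u x₀ →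
    f x₀ ≤ F (Hess n φ x₀)

/-- `u` is a viscosity solution of `F(D²u) = f` in `U`. -/
def ViscEq (n : ℕ) (F : Matrix (Fin n) (Fin n) ℝ → ℝ) (u f : EucSp n → ℝ)
    (U : Set (EucSp n)) : Prop :=
  ViscLE n F u f U ∧ ViscGE n F u f U

/-- `F` is uniformly elliptic with respect to the class `L_{λ,Λ}`. -/
def UniformlyElliptic (n : ℕ) (lam Lam : ℝ) (F : Matrix (Fin n) (Fin n) ℝ → ℝ) : Prop :=
  ∀ X Y : Matrix (Fin n) (Fin n) ℝ, X.IsSymm → Y.IsSymm →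
    PucciInf n lam Lam (X - Y) ≤ F X - F Y ∧ F X - F Y ≤ PucciSup n lam Lam (X - Y)

/-- `‖w‖_{C^γ(S)} ≤ K`: `w` is bounded by `K` and `γ`-Hölder with constant `K` on `S`. -/
def HolderBnd (n : ℕ) (γ K : ℝ) (S : Set (EucSp n)) (w : EucSp n → ℝ) : Prop :=
  (∀ x ∈ S, |w x| ≤ K) ∧ ∀ x ∈ S, ∀ y ∈ S, |w x - w y| ≤ K * ‖x - y‖ ^ γ

/-- The pair `(u, v)` solves the two membranes problem for `(F, G, f, g, u₀, v₀)` in the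
viscosity sense. -/
def SolvesTwoMembranes (n : ℕ) (F G : Matrix (Fin n) (Fin n) ℝ → ℝ)
    (f g u₀ v₀ u v : EucSp n → ℝ) : Prop :=
  ContinuousOn u (closedBall 0 1) ∧ ContinuousOn v (closedBall 0 1) ∧
  (∀ x ∈ ball (0 : EucSp n) 1, v x ≤ u x) ∧
  ViscLE n F u f (ball 0 1) ∧
  ViscGE n G v g (ball 0 1) ∧
  ViscEq n F u f ({x | v x < u x} ∩ ball 0 1) ∧
  ViscEq n G v g ({x | v x < u x} ∩ ball 0 1) ∧
  (∀ x ∈ sphere (0 : EucSp n) 1, u x = u₀ x ∧ v x = v₀ x)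

/-- The `L^∞` norm of `f` on `S` (as a `sSup`). -/
def supAbs (n : ℕ) (S : Set (EucSp n)) (f : EucSp n → ℝ) : ℝ :=
  sSup ((fun x => |f x|) '' S)

/-- **Proposition 3.3 (Calderón–Zygmund type bound).** Let `F, G` be uniformly elliptic
operators with `G(X) ≤ F(X)` for all symmetric `X`, and let `(u, v)` solve the two membranes
problem for `(F, G, f, g, u₀, v₀)`. Then `|F(D²u)| ≤ max(‖f‖_∞, ‖g‖_∞)` in `B₁` in the
viscosity sense: any `C²` function `φ` touching `u` from below at `x₀ ∈ B₁` satisfies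
`F(D²φ(x₀)) ≤ ‖f‖_{L^∞(B₁)}`, and any `C²` function touching `u` from above at `x₀ ∈ B₁`
satisfies `F(D²φ(x₀)) ≥ −max(‖f‖_{L^∞(B₁)}, ‖g‖_{L^∞(B₁)})`. -/
lemma hess_isSymm (n : ℕ) (φ : EucSp n → ℝ) (hφ : ContDiff ℝ 2 φ) (x : EucSp n) :
    (Hess n φ x).IsSymm := by
  have hd : ∀ y, HasFDerivAt φ (fderiv ℝ φ y) y := fun y =>
    (hφ.differentiable two_ne_zero y).hasFDerivAt
  have hd2 : HasFDerivAt (fderiv ℝ φ) (fderiv ℝ (fderiv ℝ φ) x) x :=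
    ((hφ.fderiv_right (m := 1) (le_refl 2)).differentiable one_ne_zero x).hasFDerivAt
  have key : ∀ w, fderiv ℝ (fun y => fderiv ℝ φ y w) x
      = (ContinuousLinearMap.apply ℝ ℝ w).comp (fderiv ℝ (fderiv ℝ φ) x) := fun w =>
    ((ContinuousLinearMap.apply ℝ ℝ w).hasFDerivAt.comp x hd2).fderiv
  have symm := second_derivative_symmetric hd hd2
  unfold Matrix.IsSymm
  ext i j
  simp only [Hess, Matrix.transpose_apply, Matrix.of_apply, key]
  exact symm _ _

lemma abs_le_supAbs (n : ℕ) (f : EucSp n → ℝ)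
    (hf : ∃ K, ∀ x ∈ ball (0 : EucSp n) 1, |f x| ≤ K)
    {x₀ : EucSp n} (hx₀ : x₀ ∈ ball (0 : EucSp n) 1) :
    |f x₀| ≤ supAbs n (ball 0 1) f := by
  obtain ⟨K, hK⟩ := hf
  refine le_csSup ⟨K, ?_⟩ ⟨x₀, hx₀, rfl⟩
  rintro _ ⟨y, hy, rfl⟩
  exact hK y hy

theorem two_membranes_visc_hessian_bound
    (n : ℕ) (lam Lam : ℝ) (F G : Matrix (Fin n) (Fin n) ℝ → ℝ)
    (f g u₀ v₀ u v : EucSp n → ℝ)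
    (hlam : 0 < lam) (hLam : lam < Lam)
    (hFell : UniformlyElliptic n lam Lam F) (hGell : UniformlyElliptic n lam Lam G)
    (hGF : ∀ X : Matrix (Fin n) (Fin n) ℝ, X.IsSymm → G X ≤ F X)
    (hf : ∃ K, ∀ x ∈ ball (0 : EucSp n) 1, |f x| ≤ K)
    (hg : ∃ K, ∀ x ∈ ball (0 : EucSp n) 1, |g x| ≤ K)
    (hsol : SolvesTwoMembranes n F G f g u₀ v₀ u v) :
    (∀ φ : EucSp n → ℝ, ContDiff ℝ 2 φ → ∀ x₀ ∈ ball (0 : EucSp n) 1,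
      (∀ x ∈ ball (0 : EucSp n) 1, φ x ≤ u x) → φ x₀ = u x₀ →
        F (Hess n φ x₀) ≤ supAbs n (ball 0 1) f) ∧
    (∀ φ : EucSp n → ℝ, ContDiff ℝ 2 φ → ∀ x₀ ∈ ball (0 : EucSp n) 1,
      (∀ x ∈ ball (0 : EucSp n) 1, u x ≤ φ x) → φ x₀ = u x₀ →
        -(max (supAbs n (ball 0 1) f) (supAbs n (ball 0 1) g)) ≤ F (Hess n φ x₀)) := by
  obtain ⟨hu, hv, hvu, hLEu, hGEv, hFeq, hGeq, hbd⟩ := hsol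
  constructor
  · intro φ hφ x₀ hx₀ hle heq
    have h1 : F (Hess n φ x₀) ≤ f x₀ := hLEu φ hφ x₀ hx₀ hle heq
    have h2 : |f x₀| ≤ supAbs n (ball 0 1) f := abs_le_supAbs n f hf hx₀
    linarith [le_abs_self (f x₀)]
  · intro φ hφ x₀ hx₀ hge heq
    rcases lt_or_eq_of_le (hvu x₀ hx₀) with hlt | heqv
    · -- x₀ ∈ {v < u} ∩ ball : use F(D²u) = f there
      have hx₀' : x₀ ∈ ({x | v x < u x} ∩ ball 0 1 : Set (EucSp n)) := ⟨hlt, hx₀⟩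
      have h1 : f x₀ ≤ F (Hess n φ x₀) :=
        hFeq.2 φ hφ x₀ hx₀' (fun x hx => hge x hx.2) heq
      have h2 : |f x₀| ≤ supAbs n (ball 0 1) f := abs_le_supAbs n f hf hx₀
      have h3 : supAbs n (ball 0 1) f ≤ max (supAbs n (ball 0 1) f) (supAbs n (ball 0 1) g) :=
        le_max_left _ _
      linarith [neg_abs_le (f x₀)]
    · -- u x₀ = v x₀ : φ touches v from above, use G(D²v) ≥ g and G ≤ F
      have h1 : g x₀ ≤ G (Hess n φ x₀) := by
        refine hGEv φ hφ x₀ hx₀ (fun x hx => le_trans (hvu x hx) (hge x hx)) ?_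
        rw [heq, ← heqv]
      have h2 : G (Hess n φ x₀) ≤ F (Hess n φ x₀) :=
        hGF _ (hess_isSymm n φ hφ x₀)
      have h3 : |g x₀| ≤ supAbs n (ball 0 1) g := abs_le_supAbs n g hg hx₀
      have h4 : supAbs n (ball 0 1) g ≤ max (supAbs n (ball 0 1) f) (supAbs n (ball 0 1) g) :=
        le_max_right _ _
      linarith [neg_abs_le (g x₀)]
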